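/- If R is a finitely generated unital associative ring and n ≥ 3, then the Steinberg group St_n(R) is finitely generated: it is generated by the finite set {e_{ij}(x) : 1 ≤ i ≠ j ≤ n, x ∈ X} for any finite ring generating set X of R containing 1. -/

import Mathlib

open FreeGroup

/-- Generators of the Steinberg group: triples `(i, j, r)` with `i ≠ j`. -/
abbrev StGen (n : ℕ) (R : Type*) := {p : Fin n × Fin n // p.1 ≠ p.2} × R

/-- The Steinberg relations. -/
def SteinbergRels (n : ℕ) (R : Type*) [Ring R] : Set (FreeGroup (StGen n R)) :=
  {w | (∃ (i j : Fin n) (h : i ≠ j) (r₁ r₂ : R),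
          w = of (⟨(i, j), h⟩, r₁) * of (⟨(i, j), h⟩, r₂) * (of (⟨(i, j), h⟩, r₁ + r₂))⁻¹) ∨
       (∃ (i j k : Fin n) (hij : i ≠ j) (hjk : j ≠ k) (hik : i ≠ k) (r₁ r₂ : R),
          w = of (⟨(i, j), hij⟩, r₁) * of (⟨(j, k), hjk⟩, r₂) * (of (⟨(i, j), hij⟩, r₁))⁻¹ * (of (⟨(j, k), hjk⟩, r₂))⁻¹ * (of (⟨(i, k), hik⟩, r₁ * r₂))⁻¹) ∨
       (∃ (i j p q : Fin n) (hij : i ≠ j) (hpq : p ≠ q) (_ : j ≠ p) (_ : i ≠ q) (r₁ r₂ : R),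
          w = of (⟨(i, j), hij⟩, r₁) * of (⟨(p, q), hpq⟩, r₂) * (of (⟨(i, j), hij⟩, r₁))⁻¹ * (of (⟨(p, q), hpq⟩, r₂))⁻¹)}

/-- The Steinberg group `St_n(R)`. -/
def Steinberg (n : ℕ) (R : Type*) [Ring R] := PresentedGroup (SteinbergRels n R)

instance (n : ℕ) (R : Type*) [Ring R] : Group (Steinberg n R) :=
  inferInstanceAs (Group (PresentedGroup (SteinbergRels n R)))

/-- The generator `e_{ij}(r)` of the Steinberg group. -/
def st {n : ℕ} {R : Type*} [Ring R] (i j : Fin n) (h : i ≠ j) (r : R) : Steinberg n R :=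
  PresentedGroup.of (⟨(i, j), h⟩, r)

lemma st_rel_one {n : ℕ} {R : Type*} [Ring R] {w : FreeGroup (StGen n R)}
    (hw : w ∈ SteinbergRels n R) :
    (PresentedGroup.mk (SteinbergRels n R) w : Steinberg n R) = 1 :=
  (QuotientGroup.eq_one_iff w).2 (Subgroup.subset_normalClosure hw)

lemma st_add {n : ℕ} {R : Type*} [Ring R] (i j : Fin n) (h : i ≠ j) (r₁ r₂ : R) :
    st i j h r₁ * st i j h r₂ = st i j h (r₁ + r₂) := by
  have := st_rel_one (n := n) (R := R)
    (Or.inl ⟨i, j, h, r₁, r₂, rfl⟩)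
  simp [st, PresentedGroup.of, mul_inv_eq_one, map_mul] at this
  exact this

lemma st_comm {n : ℕ} {R : Type*} [Ring R] (i j k : Fin n) (hij : i ≠ j) (hjk : j ≠ k)
    (hik : i ≠ k) (r₁ r₂ : R) :
    st i j hij r₁ * st j k hjk r₂ * (st i j hij r₁)⁻¹ * (st j k hjk r₂)⁻¹
      = st i k hik (r₁ * r₂) := by
  have := st_rel_one (n := n) (R := R)
    (Or.inr (Or.inl ⟨i, j, k, hij, hjk, hik, r₁, r₂, rfl⟩))
  simp [st, PresentedGroup.of, mul_inv_eq_one, map_mul] at this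
  exact this

lemma st_zero {n : ℕ} {R : Type*} [Ring R] (i j : Fin n) (h : i ≠ j) :
    st i j h (0 : R) = 1 := by
  have := st_add i j h (0 : R) 0
  rw [add_zero] at this
  exact left_eq_mul.mp this.symm

lemma st_neg {n : ℕ} {R : Type*} [Ring R] (i j : Fin n) (h : i ≠ j) (r : R) :
    st i j h (-r) = (st i j h r)⁻¹ := by
  have := st_add i j h r (-r)
  rw [add_neg_cancel, st_zero] at this
  exact eq_inv_of_mul_eq_one_right (by rw [← this])

lemma exists_third {n : ℕ} (hn : 3 ≤ n) (i j : Fin n) :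
    ∃ k : Fin n, i ≠ k ∧ j ≠ k := by
  by_contra hcon
  push_neg at hcon
  have hsub : (Finset.univ : Finset (Fin n)) ⊆ {i, j} := by
    intro x _
    by_cases hx : i = x
    · simp [hx]
    · simp [hcon x hx]
  have := Finset.card_le_card hsub
  simp only [Finset.card_univ, Fintype.card_fin] at this
  have h2 : ({i, j} : Finset (Fin n)).card ≤ 2 :=
    (Finset.card_insert_le _ _).trans (by simp)
  omega

/-- If `R` is a finitely generated unital ring, generated by a finite set `X` containing `1`,
and `n ≥ 3`, then `St_n(R)` is generated by the finite set `{e_{ij}(x) : i ≠ j, x ∈ X}`;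
in particular it is finitely generated. -/
theorem steinberg_finitely_generated {n : ℕ} (hn : 3 ≤ n) (R : Type*) [Ring R]
    (X : Finset R) (h1X : (1 : R) ∈ X) (hX : Subring.closure (X : Set R) = ⊤) :
    Subgroup.closure {g : Steinberg n R | ∃ (i j : Fin n) (h : i ≠ j) (x : R),
        x ∈ X ∧ g = st i j h x} = ⊤ := by
  set H := Subgroup.closure {g : Steinberg n R | ∃ (i j : Fin n) (h : i ≠ j) (x : R),
        x ∈ X ∧ g = st i j h x} with hH
  have key : ∀ r : R, ∀ (i j : Fin n) (h : i ≠ j), st i j h r ∈ H := by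
    have : ∀ r : R, r ∈ Subring.closure (X : Set R) →
        ∀ (i j : Fin n) (h : i ≠ j), st i j h r ∈ H := by
      intro r hr
      induction hr using Subring.closure_induction with
      | mem x hx => exact fun i j h => Subgroup.subset_closure ⟨i, j, h, x, hx, rfl⟩
      | zero => intro i j h; rw [st_zero]; exact one_mem H
      | one => exact fun i j h => Subgroup.subset_closure ⟨i, j, h, 1, h1X, rfl⟩
      | add a b _ _ ha hb =>
        intro i j h
        rw [← st_add i j h a b]
        exact mul_mem (ha i j h) (hb i j h)
      | neg a _ ha =>
        intro i j h
        rw [st_neg]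
        exact inv_mem (ha i j h)
      | mul a b _ _ ha hb =>
        intro i k hik
        obtain ⟨j, hij, hkj⟩ := exists_third hn i k
        rw [← st_comm i j k hij (Ne.symm hkj) hik a b]
        exact mul_mem (mul_mem (mul_mem (ha i j hij) (hb j k (Ne.symm hkj)))
          (inv_mem (ha i j hij))) (inv_mem (hb j k (Ne.symm hkj)))
    intro r
    exact this r (by rw [hX]; trivial)
  have hc : @Subgroup.closure (Steinberg n R) _ (Set.range (PresentedGroup.of : StGen n R → Steinberg n R)) = (⊤ : Subgroup (Steinberg n R)) :=
    PresentedGroup.closure_range_of (SteinbergRels n R)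
  rw [eq_top_iff, ← hc]
  rw [Subgroup.closure_le]
  rintro _ ⟨⟨⟨⟨i, j⟩, hij⟩, r⟩, rfl⟩
  exact key r i j hij
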